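/- For every real t, the two-dimensional Behrens–Fisher integral collapses to a one-dimensional Euler–Beta integral: f_T(t) = [(ν₁/g)^{a} · (ν₂/h)^{b} · Γ(c) / (√(2π(g+h)) · 2^{a+b} · Γ(a) · Γ(b))] · ∫₀¹ u^{a−1} (1−u)^{b−1} · (α(t) + u·ν₁/(2g) + (1−u)·ν₂/(2h))^{−c} du. -/

import Mathlib

open MeasureTheory

set_option maxHeartbeats 1000000

namespace BF
open Set Real

/-- scaling substitution -/
lemma scale {k : ℝ} (hk : 0 < k) (s : ℝ) (f : ℝ → ℝ) :
    ∫ w in Ioi (0:ℝ), w ^ (s-1) * f w = k ^ s * ∫ x in Ioi (0:ℝ), x ^ (s-1) * f (k * x) := by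
  have h := integral_comp_mul_left_Ioi (fun w => w ^ (s-1) * f w) 0 hk
  rw [mul_zero] at h
  have h2 : (∫ x in Ioi (0:ℝ), (k*x) ^ (s-1) * f (k*x))
      = k ^ (s-1) * ∫ x in Ioi (0:ℝ), x ^ (s-1) * f (k*x) := by
    rw [← integral_const_mul]
    refine setIntegral_congr_fun measurableSet_Ioi fun x hx => ?_
    rw [Real.mul_rpow hk.le (le_of_lt hx)]; ring
  rw [h2, smul_eq_mul] at h
  have hks : k ^ s = k * k ^ (s-1) := by
    nth_rewrite 1 [show s = 1 + (s-1) by ring]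
    rw [Real.rpow_add hk, Real.rpow_one]
  rw [hks, mul_assoc, h]
  field_simp


lemma integrableOn_rpow_exp {s r : ℝ} (hs : 0 < s) (hr : 0 < r) :
    IntegrableOn (fun x : ℝ => x ^ (s - 1) * Real.exp (-(r * x))) (Ioi 0) := by
  have := integrableOn_rpow_mul_exp_neg_mul_rpow (p := 1) (s := s - 1) (b := r)
    (by linarith) one_pos hr
  refine this.congr_fun (fun x hx => ?_) measurableSet_Ioi
  beta_reduce
  rw [Real.rpow_one, neg_mul]

lemma sqrt_one_add_le {y : ℝ} (hy : 0 ≤ y) : Real.sqrt (1 + y) ≤ 1 + y ^ ((1:ℝ)/2) := by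
  have h2 : y ^ ((1:ℝ)/2) * y ^ ((1:ℝ)/2) = y := by
    rw [← Real.rpow_add' hy (by norm_num)]; norm_num
  have hnn : (0:ℝ) ≤ 1 + y ^ ((1:ℝ)/2) := by positivity
  rw [show (1:ℝ) + y ^ ((1:ℝ)/2) = Real.sqrt ((1 + y ^ ((1:ℝ)/2))^2) from (Real.sqrt_sq hnn).symm]
  apply Real.sqrt_le_sqrt
  nlinarith [Real.rpow_nonneg hy ((1:ℝ)/2)]

/-- pointwise bound for the J integrand -/
lemma J_le {b r y : ℝ} (hy : 0 < y) :
    Real.sqrt (1+y) * (y ^ (b-1) * Real.exp (-(r*y)))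
      ≤ y ^ (b-1) * Real.exp (-(r*y)) + y ^ ((b+1/2)-1) * Real.exp (-(r*y)) := by
  have h1 : y ^ ((b+1/2)-1) = y ^ ((1:ℝ)/2) * y ^ (b-1) := by
    rw [← Real.rpow_add hy]; ring_nf
  have h2 : (0:ℝ) ≤ y ^ (b-1) * Real.exp (-(r*y)) := by positivity
  calc Real.sqrt (1+y) * (y ^ (b-1) * Real.exp (-(r*y)))
      ≤ (1 + y ^ ((1:ℝ)/2)) * (y ^ (b-1) * Real.exp (-(r*y))) :=
        mul_le_mul_of_nonneg_right (sqrt_one_add_le hy.le) h2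
    _ = y ^ (b-1) * Real.exp (-(r*y)) + y ^ ((b+1/2)-1) * Real.exp (-(r*y)) := by
        rw [h1]; ring

lemma contOn_J (b r : ℝ) :
    ContinuousOn (fun y : ℝ => Real.sqrt (1+y) * (y ^ (b-1) * Real.exp (-(r*y)))) (Ioi 0) := by
  apply ContinuousOn.mul
  · exact ((continuous_const.add continuous_id).sqrt).continuousOn
  · apply ContinuousOn.mul
    · exact continuousOn_id.rpow_const fun y hy => Or.inl (ne_of_gt hy)
    · exact ((continuous_const.mul continuous_id).neg.rexp).continuousOn

lemma intJ {b r : ℝ} (hb : 0 < b) (hr : 0 < r) :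
    IntegrableOn (fun y : ℝ => Real.sqrt (1+y) * (y ^ (b-1) * Real.exp (-(r*y)))) (Ioi 0) := by
  apply Integrable.mono'
    ((integrableOn_rpow_exp hb hr).add (integrableOn_rpow_exp (by linarith : (0:ℝ) < b+1/2) hr))
    ((contOn_J b r).aestronglyMeasurable measurableSet_Ioi)
  rw [ae_restrict_iff' measurableSet_Ioi]
  refine ae_of_all _ fun y hy => ?_
  have hy' : (0:ℝ) < y := hy
  rw [Real.norm_eq_abs, abs_of_nonneg (by positivity)]
  exact J_le hy'

/-- value bound for the J integral -/
lemma intJ_val_le {b r : ℝ} (hb : 0 < b) (hr : 0 < r) :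
    (∫ y in Ioi (0:ℝ), Real.sqrt (1+y) * (y ^ (b-1) * Real.exp (-(r*y))))
      ≤ (1/r) ^ b * Real.Gamma b + (1/r) ^ (b+1/2) * Real.Gamma (b+1/2) := by
  rw [← Real.integral_rpow_mul_exp_neg_mul_Ioi hb hr,
    ← Real.integral_rpow_mul_exp_neg_mul_Ioi (by linarith : (0:ℝ) < b+1/2) hr,
    ← integral_add (integrableOn_rpow_exp hb hr)
      (integrableOn_rpow_exp (by linarith : (0:ℝ) < b+1/2) hr)]
  exact setIntegral_mono_on (intJ hb hr)
    ((integrableOn_rpow_exp hb hr).add (integrableOn_rpow_exp (by linarith) hr))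
    measurableSet_Ioi fun y hy => J_le hy


lemma intF {a b A B : ℝ} (ha : 0 < a) (hb : 0 < b) (hA : 0 < A) (hB : 0 < B) :
    Integrable (Function.uncurry fun x y : ℝ =>
      x ^ (a + b + 1/2 - 1) * Real.exp (-(A*x)) *
        (Real.sqrt (1+y) * (y ^ (b-1) * Real.exp (-(B*x*y)))))
      ((volume.restrict (Ioi 0)).prod (volume.restrict (Ioi 0))) := by
  have hmeas : AEStronglyMeasurable (Function.uncurry fun x y : ℝ =>
      x ^ (a + b + 1/2 - 1) * Real.exp (-(A*x)) *
        (Real.sqrt (1+y) * (y ^ (b-1) * Real.exp (-(B*x*y)))))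
      ((volume.restrict (Ioi 0)).prod (volume.restrict (Ioi 0))) := by
    rw [Measure.prod_restrict]
    apply ContinuousOn.aestronglyMeasurable _ (measurableSet_Ioi.prod measurableSet_Ioi)
    apply ContinuousOn.mul
    · apply ContinuousOn.mul
      · exact continuous_fst.continuousOn.rpow_const fun p hp => Or.inl (ne_of_gt hp.1)
      · exact ((continuous_const.mul continuous_fst).neg.rexp).continuousOn
    · apply ContinuousOn.mul
      · exact ((continuous_const.add continuous_snd).sqrt).continuousOn
      · apply ContinuousOn.mul
        · exact continuous_snd.continuousOn.rpow_const fun p hp => Or.inl (ne_of_gt hp.2)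
        · exact (((continuous_const.mul continuous_fst).mul continuous_snd).neg.rexp).continuousOn
  rw [integrable_prod_iff hmeas]
  simp only [Function.uncurry_apply_pair]
  refine ⟨?_, ?_⟩
  · rw [ae_restrict_iff' measurableSet_Ioi]
    refine ae_of_all _ fun x hx => ?_
    exact (intJ hb (mul_pos hB hx)).const_mul _
  · -- bound by φ
    have hpow : ∀ x : ℝ, 0 < x → ∀ p q : ℝ, (1/(B*x))^p * x^q = (1/B)^p * x^(q - p) := by
      intro x hx p q
      rw [one_div, mul_inv, Real.mul_rpow (inv_nonneg.2 hB.le) (inv_nonneg.2 hx.le),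
        Real.inv_rpow hx.le, ← Real.rpow_neg hx.le, mul_assoc, ← Real.rpow_add hx, ← one_div]
      ring_nf
    apply Integrable.mono'
      (((integrableOn_rpow_exp (by linarith : (0:ℝ) < a + 1/2) hA).const_mul
          ((1/B)^b * Real.Gamma b)).add
        ((integrableOn_rpow_exp ha hA).const_mul ((1/B)^(b+1/2) * Real.Gamma (b+1/2))))
      (hmeas.norm.integral_prod_right')
    rw [ae_restrict_iff' measurableSet_Ioi]
    refine ae_of_all _ fun x hx => ?_
    have hx' : (0:ℝ) < x := hx
    simp only [Function.uncurry_apply_pair, Pi.add_apply]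
    have hC : (0:ℝ) ≤ x ^ (a + b + 1/2 - 1) * Real.exp (-(A*x)) := by positivity
    rw [Real.norm_eq_abs, abs_of_nonneg (integral_nonneg fun y => norm_nonneg _)]
    have e1 : (∫ y in Ioi (0:ℝ), ‖x ^ (a + b + 1/2 - 1) * Real.exp (-(A*x)) *
        (Real.sqrt (1+y) * (y ^ (b-1) * Real.exp (-(B*x*y))))‖)
        = (x ^ (a + b + 1/2 - 1) * Real.exp (-(A*x))) *
          ∫ y in Ioi (0:ℝ), Real.sqrt (1+y) * (y ^ (b-1) * Real.exp (-((B*x)*y))) := by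
      rw [← integral_const_mul]
      refine setIntegral_congr_fun measurableSet_Ioi fun y hy => ?_
      have hy' : (0:ℝ) < y := hy
      rw [Real.norm_eq_abs, abs_of_nonneg (by positivity)]
    rw [e1]
    calc (x ^ (a + b + 1/2 - 1) * Real.exp (-(A*x))) *
          ∫ y in Ioi (0:ℝ), Real.sqrt (1+y) * (y ^ (b-1) * Real.exp (-((B*x)*y)))
        ≤ (x ^ (a + b + 1/2 - 1) * Real.exp (-(A*x))) *
          ((1/(B*x)) ^ b * Real.Gamma b + (1/(B*x)) ^ (b+1/2) * Real.Gamma (b+1/2)) :=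
          mul_le_mul_of_nonneg_left (intJ_val_le hb (mul_pos hB hx')) hC
      _ = (1/B)^b * Real.Gamma b * (x ^ (a + 1/2 - 1) * Real.exp (-(A*x)))
          + (1/B)^(b+1/2) * Real.Gamma (b+1/2) * (x ^ (a - 1) * Real.exp (-(A*x))) := by
          have k1 := hpow x hx' b (a + b + 1/2 - 1)
          have k2 := hpow x hx' (b+1/2) (a + b + 1/2 - 1)
          rw [show a + b + 1/2 - 1 - b = a + 1/2 - 1 by ring] at k1
          rw [show a + b + 1/2 - 1 - (b+1/2) = a - 1 by ring] at k2
          calc (x ^ (a + b + 1/2 - 1) * Real.exp (-(A*x))) *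
              ((1/(B*x)) ^ b * Real.Gamma b + (1/(B*x)) ^ (b+1/2) * Real.Gamma (b+1/2))
              = ((1/(B*x))^b * x^(a+b+1/2-1)) * Real.Gamma b * Real.exp (-(A*x))
                + ((1/(B*x))^(b+1/2) * x^(a+b+1/2-1)) * Real.Gamma (b+1/2) * Real.exp (-(A*x)) := by
                ring
            _ = _ := by rw [k1, k2]; ring


lemma main {a b A B : ℝ} (ha : 0 < a) (hb : 0 < b) (hA : 0 < A) (hB : 0 < B) :
    (∫ x in Ioi (0:ℝ), ∫ y in Ioi (0:ℝ),
        Real.sqrt (x+y) * Real.exp (-(A*x)) * Real.exp (-(B*y)) * x ^ (a-1) * y ^ (b-1))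
    = Real.Gamma (a+b+1/2) *
      ∫ u in (0:ℝ)..1, u ^ (a-1) * (1-u) ^ (b-1) * (A*u+B*(1-u)) ^ (-(a+b+1/2)) := by
  -- Step A
  have stepA : ∀ x ∈ Ioi (0:ℝ),
      (∫ y in Ioi (0:ℝ),
        Real.sqrt (x+y) * Real.exp (-(A*x)) * Real.exp (-(B*y)) * x ^ (a-1) * y ^ (b-1))
      = ∫ y in Ioi (0:ℝ), x ^ (a + b + 1/2 - 1) * Real.exp (-(A*x)) *
          (Real.sqrt (1+y) * (y ^ (b-1) * Real.exp (-(B*x*y)))) := by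
    intro x hx
    have hx' : (0:ℝ) < x := hx
    have l1 : (∫ y in Ioi (0:ℝ),
        Real.sqrt (x+y) * Real.exp (-(A*x)) * Real.exp (-(B*y)) * x ^ (a-1) * y ^ (b-1))
        = ∫ y in Ioi (0:ℝ), y ^ (b-1) *
          (Real.sqrt (x+y) * Real.exp (-(A*x)) * Real.exp (-(B*y)) * x ^ (a-1)) := by
      refine integral_congr_ae (Filter.Eventually.of_forall fun y => by ring)
    rw [l1, scale hx' b
      (fun y => Real.sqrt (x+y) * Real.exp (-(A*x)) * Real.exp (-(B*y)) * x ^ (a-1)),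
      ← integral_const_mul]
    refine setIntegral_congr_fun measurableSet_Ioi fun y hy => ?_
    have hy' : (0:ℝ) < y := hy
    have s1 : Real.sqrt (x + x*y) = Real.sqrt x * Real.sqrt (1+y) := by
      rw [← Real.sqrt_mul hx'.le]; ring_nf
    have s2 : x ^ b * Real.sqrt x * x ^ (a-1) = x ^ (a + b + 1/2 - 1) := by
      rw [Real.sqrt_eq_rpow, ← Real.rpow_add hx', ← Real.rpow_add hx']
      congr 1; ring
    rw [s1, show B*(x*y) = B*x*y by ring, ← s2]
    ring
  rw [setIntegral_congr_fun measurableSet_Ioi stepA]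
  -- Step B : swap
  rw [MeasureTheory.integral_integral_swap (intF ha hb hA hB)]
  -- Step C : evaluate inner integral
  have stepC : ∀ y ∈ Ioi (0:ℝ),
      (∫ x in Ioi (0:ℝ), x ^ (a + b + 1/2 - 1) * Real.exp (-(A*x)) *
          (Real.sqrt (1+y) * (y ^ (b-1) * Real.exp (-(B*x*y)))))
      = Real.sqrt (1+y) * y ^ (b-1) *
          ((1/(A+B*y)) ^ (a+b+1/2) * Real.Gamma (a+b+1/2)) := by
    intro y hy
    have hy' : (0:ℝ) < y := hy
    have hAB : 0 < A + B*y := by positivity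
    have l2 : (∫ x in Ioi (0:ℝ), x ^ (a + b + 1/2 - 1) * Real.exp (-(A*x)) *
          (Real.sqrt (1+y) * (y ^ (b-1) * Real.exp (-(B*x*y)))))
        = (Real.sqrt (1+y) * y ^ (b-1)) *
          ∫ x in Ioi (0:ℝ), x ^ (a + b + 1/2 - 1) * Real.exp (-((A+B*y)*x)) := by
      rw [← integral_const_mul]
      refine integral_congr_ae (Filter.Eventually.of_forall fun x => ?_)
      beta_reduce
      rw [show -((A+B*y)*x) = -(A*x) + -(B*x*y) by ring, Real.exp_add]
      ring
    rw [l2, Real.integral_rpow_mul_exp_neg_mul_Ioi (by linarith) hAB]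
  rw [setIntegral_congr_fun measurableSet_Ioi stepC]
  -- Step D : substitution u ↦ u⁻¹ - 1 : Ioo 0 1 → Ioi 0
  have himg : (fun u : ℝ => u⁻¹ - 1) '' Ioo 0 1 = Ioi 0 := by
    ext y
    simp only [mem_image, mem_Ioo, mem_Ioi]
    constructor
    · rintro ⟨u, ⟨hu0, hu1⟩, rfl⟩
      have : 1 < u⁻¹ := (one_lt_inv₀ hu0).mpr hu1
      linarith
    · intro hy
      refine ⟨(1+y)⁻¹, ⟨by positivity, ?_⟩, ?_⟩
      · rw [inv_lt_one₀ (by positivity)]; linarith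
      · rw [inv_inv]; ring
  have hderiv : ∀ u ∈ Ioo (0:ℝ) 1,
      HasDerivWithinAt (fun u : ℝ => u⁻¹ - 1) (-(u^2)⁻¹) (Ioo 0 1) u :=
    fun u hu => ((hasDerivAt_inv (ne_of_gt hu.1)).sub_const 1).hasDerivWithinAt
  have hinj : InjOn (fun u : ℝ => u⁻¹ - 1) (Ioo 0 1) := by
    intro u hu v hv huv
    simp only at huv
    exact inv_injective (by linarith)
  rw [← himg, integral_image_eq_integral_abs_deriv_smul measurableSet_Ioo hderiv hinj]
  -- pointwise identity
  have key : ∀ u ∈ Ioo (0:ℝ) 1,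
      |(-(u^2)⁻¹)| • (Real.sqrt (1 + (u⁻¹ - 1)) * (u⁻¹ - 1) ^ (b-1) *
          ((1/(A + B*(u⁻¹ - 1))) ^ (a+b+1/2) * Real.Gamma (a+b+1/2)))
      = Real.Gamma (a+b+1/2) *
          (u ^ (a-1) * (1-u) ^ (b-1) * (A*u+B*(1-u)) ^ (-(a+b+1/2))) := by
    intro u hu
    obtain ⟨hu0, hu1⟩ := hu
    have h1u : (0:ℝ) < 1 - u := by linarith
    have hP : 0 < A*u + B*(1-u) := add_pos (mul_pos hA hu0) (mul_pos hB h1u)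
    have e1 : 1 + (u⁻¹ - 1) = u⁻¹ := by ring
    have e2 : u⁻¹ - 1 = (1-u)/u := by field_simp
    have e3 : A + B*(u⁻¹ - 1) = (A*u + B*(1-u))/u := by field_simp
    rw [smul_eq_mul, abs_neg, abs_inv, abs_of_nonneg (sq_nonneg u), e1, e3, e2]
    have p1 : Real.sqrt u⁻¹ = u ^ (-(1/2) : ℝ) := by
      rw [Real.sqrt_eq_rpow, ← Real.rpow_neg_one u, ← Real.rpow_mul hu0.le]
      norm_num
    have p2 : ((1-u)/u) ^ (b-1) = (1-u) ^ (b-1) * u ^ (-(b-1)) := by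
      rw [Real.div_rpow h1u.le hu0.le, Real.rpow_neg hu0.le, div_eq_mul_inv]
    have p3 : (1/((A*u+B*(1-u))/u)) ^ (a+b+1/2)
        = u ^ (a+b+1/2) * (A*u+B*(1-u)) ^ (-(a+b+1/2)) := by
      rw [one_div, inv_div, Real.div_rpow hu0.le hP.le, Real.rpow_neg hP.le, div_eq_mul_inv]
    have p4 : ((u^2)⁻¹ : ℝ) = u ^ (-2 : ℝ) := by
      rw [← Real.rpow_natCast u 2, ← Real.rpow_neg hu0.le]; norm_num
    rw [p1, p2, p3, p4]
    have p5 : u ^ (-2:ℝ) * u ^ (-(1/2):ℝ) * u ^ (-(b-1)) * u ^ (a+b+1/2) = u ^ (a-1) := by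
      rw [← Real.rpow_add hu0, ← Real.rpow_add hu0, ← Real.rpow_add hu0]
      congr 1; ring
    rw [← p5]
    ring
  rw [setIntegral_congr_fun measurableSet_Ioo key, integral_const_mul,
    ← integral_Ioc_eq_integral_Ioo, ← intervalIntegral.integral_of_le zero_le_one]


end BF


/-- The Behrens–Fisher null density, as the absolutely convergent double integral. -/
noncomputable def behrensFisherPDF (ν₁ ν₂ : ℕ) (g h : ℝ) (t : ℝ) : ℝ :=
  ∫ w₁ in Set.Ioi (0 : ℝ), ∫ w₂ in Set.Ioi (0 : ℝ),
    (Real.sqrt (g * w₁ / ν₁ + h * w₂ / ν₂) / Real.sqrt (2 * Real.pi * (g + h))) *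
      Real.exp (-(t ^ 2 / (2 * (g + h))) * (g * w₁ / ν₁ + h * w₂ / ν₂)) *
      (w₁ ^ ((ν₁ : ℝ) / 2 - 1) * Real.exp (-w₁ / 2) /
        ((2 : ℝ) ^ ((ν₁ : ℝ) / 2) * Real.Gamma ((ν₁ : ℝ) / 2))) *
      (w₂ ^ ((ν₂ : ℝ) / 2 - 1) * Real.exp (-w₂ / 2) /
        ((2 : ℝ) ^ ((ν₂ : ℝ) / 2) * Real.Gamma ((ν₂ : ℝ) / 2)))

/-- **Euler–Beta collapse of the Behrens–Fisher double integral.**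
With `a = ν₁/2`, `b = ν₂/2`, `c = (ν₁+ν₂+1)/2` and `α(t) = t²/(2(g+h))`,
`f_T(t) = [(ν₁/g)^a (ν₂/h)^b Γ(c)/(√(2π(g+h)) 2^{a+b} Γ(a) Γ(b))] ·
  ∫₀¹ u^{a-1} (1-u)^{b-1} (α(t) + uν₁/(2g) + (1-u)ν₂/(2h))^{-c} du`. -/
theorem behrensFisher_euler_beta_representation
    (g h : ℝ) (hg : 0 < g) (hh : 0 < h) (ν₁ ν₂ : ℕ) (hν₁ : 0 < ν₁) (hν₂ : 0 < ν₂)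
    (t : ℝ) :
    behrensFisherPDF ν₁ ν₂ g h t =
      (((ν₁ : ℝ) / g) ^ ((ν₁ : ℝ) / 2) * ((ν₂ : ℝ) / h) ^ ((ν₂ : ℝ) / 2) *
          Real.Gamma (((ν₁ : ℝ) + (ν₂ : ℝ) + 1) / 2) /
          (Real.sqrt (2 * Real.pi * (g + h)) *
            (2 : ℝ) ^ ((ν₁ : ℝ) / 2 + (ν₂ : ℝ) / 2) *
            Real.Gamma ((ν₁ : ℝ) / 2) * Real.Gamma ((ν₂ : ℝ) / 2))) *
        ∫ u in (0 : ℝ)..1,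
          u ^ ((ν₁ : ℝ) / 2 - 1) * (1 - u) ^ ((ν₂ : ℝ) / 2 - 1) *
            (t ^ 2 / (2 * (g + h)) + u * ν₁ / (2 * g) + (1 - u) * ν₂ / (2 * h)) ^
              (-(((ν₁ : ℝ) + (ν₂ : ℝ) + 1) / 2)) := by
  have hν₁' : (0:ℝ) < ν₁ := Nat.cast_pos.mpr hν₁
  have hν₂' : (0:ℝ) < ν₂ := Nat.cast_pos.mpr hν₂
  rw [_root_.behrensFisherPDF]
  set α : ℝ := t ^ 2 / (2 * (g + h)) with hα_def
  have hα : 0 ≤ α := div_nonneg (sq_nonneg t) (by linarith)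
  set a : ℝ := (ν₁ : ℝ) / 2 with ha_def
  set b : ℝ := (ν₂ : ℝ) / 2 with hb_def
  have ha : 0 < a := by positivity
  have hb : 0 < b := by positivity
  set A : ℝ := α + (ν₁ : ℝ) / (2 * g) with hA_def
  set B : ℝ := α + (ν₂ : ℝ) / (2 * h) with hB_def
  have hA : 0 < A := by rw [hA_def]; positivity
  have hB : 0 < B := by rw [hB_def]; positivity
  set k₁ : ℝ := (ν₁ : ℝ) / g with hk₁_def
  set k₂ : ℝ := (ν₂ : ℝ) / h with hk₂_def
  have hk₁ : 0 < k₁ := by rw [hk₁_def]; positivity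
  have hk₂ : 0 < k₂ := by rw [hk₂_def]; positivity
  set K : ℝ := (Real.sqrt (2 * Real.pi * (g + h)) * ((2:ℝ) ^ a * Real.Gamma a) *
    ((2:ℝ) ^ b * Real.Gamma b))⁻¹ with hK_def
  set J : ℝ → ℝ → ℝ := fun w₁ w₂ =>
    Real.sqrt (g * w₁ / ν₁ + h * w₂ / ν₂) * Real.exp (-α * (g * w₁ / ν₁ + h * w₂ / ν₂)) *
      Real.exp (-w₁ / 2) * Real.exp (-w₂ / 2) with hJ_def
  -- Step 1: pull out constants
  have h1 : (∫ w₁ in Set.Ioi (0 : ℝ), ∫ w₂ in Set.Ioi (0 : ℝ),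
      (Real.sqrt (g * w₁ / ν₁ + h * w₂ / ν₂) / Real.sqrt (2 * Real.pi * (g + h))) *
        Real.exp (-α * (g * w₁ / ν₁ + h * w₂ / ν₂)) *
        (w₁ ^ (a - 1) * Real.exp (-w₁ / 2) / ((2 : ℝ) ^ a * Real.Gamma a)) *
        (w₂ ^ (b - 1) * Real.exp (-w₂ / 2) / ((2 : ℝ) ^ b * Real.Gamma b)))
      = K * ∫ w₁ in Set.Ioi (0 : ℝ), w₁ ^ (a-1) *
          ∫ w₂ in Set.Ioi (0 : ℝ), w₂ ^ (b-1) * J w₁ w₂ := by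
    rw [← integral_const_mul]
    refine integral_congr_ae (Filter.Eventually.of_forall fun w₁ => ?_)
    beta_reduce
    rw [← integral_const_mul, ← integral_const_mul]
    refine integral_congr_ae (Filter.Eventually.of_forall fun w₂ => ?_)
    beta_reduce
    rw [hJ_def, hK_def]
    ring
  rw [h1, BF.scale hk₁ a]
  -- Step 2: inner scaling and simplification
  have h2 : ∀ x ∈ Set.Ioi (0:ℝ),
      x ^ (a-1) * (∫ w₂ in Set.Ioi (0 : ℝ), w₂ ^ (b-1) * J (k₁ * x) w₂)
      = k₂ ^ b * ∫ y in Set.Ioi (0:ℝ),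
          Real.sqrt (x+y) * Real.exp (-(A*x)) * Real.exp (-(B*y)) * x ^ (a-1) * y ^ (b-1) := by
    intro x hx
    have hx' : (0:ℝ) < x := hx
    rw [BF.scale hk₂ b (J (k₁ * x))]
    calc x ^ (a-1) * (k₂ ^ b * ∫ y in Set.Ioi (0:ℝ), y ^ (b-1) * J (k₁ * x) (k₂ * y))
        = k₂ ^ b * ∫ y in Set.Ioi (0:ℝ), x ^ (a-1) * (y ^ (b-1) * J (k₁ * x) (k₂ * y)) := by
          rw [integral_const_mul (x ^ (a-1))]; ring
      _ = k₂ ^ b * ∫ y in Set.Ioi (0:ℝ),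
            Real.sqrt (x+y) * Real.exp (-(A*x)) * Real.exp (-(B*y)) * x ^ (a-1) * y ^ (b-1) := by
          congr 1
          refine setIntegral_congr_fun measurableSet_Ioi fun y hy => ?_
          have hy' : (0:ℝ) < y := hy
          rw [hJ_def]
          beta_reduce
          have r1 : g * (k₁ * x) / ν₁ = x := by rw [hk₁_def]; field_simp
          have r2 : h * (k₂ * y) / ν₂ = y := by rw [hk₂_def]; field_simp
          rw [r1, r2]
          have eexp : Real.exp (-α * (x + y)) * Real.exp (-(k₁*x)/2) * Real.exp (-(k₂*y)/2)
              = Real.exp (-(A*x)) * Real.exp (-(B*y)) := by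
            rw [← Real.exp_add, ← Real.exp_add, ← Real.exp_add, hA_def, hB_def, hk₁_def, hk₂_def]
            congr 1
            field_simp
            ring
          linear_combination x ^ (a-1) * (y ^ (b-1) * Real.sqrt (x+y)) * eexp
  rw [setIntegral_congr_fun measurableSet_Ioi h2, integral_const_mul, BF.main ha hb hA hB]
  -- Step 3: constants and integrand matching
  have hgam : a + b + 1/2 = ((ν₁ : ℝ) + (ν₂ : ℝ) + 1) / 2 := by
    rw [ha_def, hb_def]; ring
  have hint : (∫ u in (0:ℝ)..1, u ^ (a-1) * (1-u) ^ (b-1) * (A*u+B*(1-u)) ^ (-(a+b+1/2)))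
      = ∫ u in (0 : ℝ)..1, u ^ (a - 1) * (1 - u) ^ (b - 1) *
          (α + u * ν₁ / (2 * g) + (1 - u) * ν₂ / (2 * h)) ^ (-(((ν₁ : ℝ) + (ν₂ : ℝ) + 1) / 2)) := by
    refine intervalIntegral.integral_congr fun u _ => ?_
    have hbase : A*u + B*(1-u) = α + u * ν₁ / (2 * g) + (1 - u) * ν₂ / (2 * h) := by
      rw [hA_def, hB_def]; ring
    rw [hbase, hgam]
  rw [hint, hgam]
  rw [show ((2:ℝ) ^ (a + b)) = (2:ℝ) ^ a * (2:ℝ) ^ b from Real.rpow_add (by norm_num) a b]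
  rw [hK_def]
  have hs : (0:ℝ) < Real.sqrt (2 * Real.pi * (g + h)) := by
    apply Real.sqrt_pos.mpr; positivity
  have hGa : 0 < Real.Gamma a := Real.Gamma_pos_of_pos ha
  have hGb : 0 < Real.Gamma b := Real.Gamma_pos_of_pos hb
  have h2a : (0:ℝ) < (2:ℝ) ^ a := by positivity
  have h2b : (0:ℝ) < (2:ℝ) ^ b := by positivity
  field_simp
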